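/- arXiv:2602.21501 — 2 statements merged into one kernel-verified Lean document; each statement's English description precedes it below -/
import Mathlib

section
/- Rademacher complexity of self-normalized classes: in the setting of the context, let F be a nonempty countable star-shaped class of measurable functions with sup_{f∈F}‖f‖_∞ ≤ M < ∞, and fix δ > 0. Then E[ sup_{f∈F} (1/n)∑_{i=1}^n εᵢ f(Zᵢ) / max(‖f‖, δ) ] ≤ (2/δ)·𝔯ₙ(F, δ). -/
open MeasureTheory ProbabilityTheory Pointwise

/-- The `L²(P)` norm `‖g‖ = (∫ g² dP)^{1/2}`. -/
noncomputable def l2norm {𝒵 : Type*} [MeasurableSpace 𝒵] (P : Measure 𝒵) (g : 𝒵 → ℝ) : ℝ :=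
  Real.sqrt (∫ z, g z ^ 2 ∂P)

/-- The symmetrized empirical sum `(1/n) ∑ᵢ εᵢ g(Zᵢ)` at sample point `ω`. -/
noncomputable def radSum {𝒵 Ω : Type*} {n : ℕ} (Z : Fin n → Ω → 𝒵) (ε : Fin n → Ω → ℝ)
    (g : 𝒵 → ℝ) (ω : Ω) : ℝ :=
  (n : ℝ)⁻¹ * ∑ i : Fin n, ε i ω * g (Z i ω)

/-- Localized Rademacher complexity
`𝔯ₙ(𝒢, δ) = E[sup {(1/n) ∑ᵢ εᵢ g(Zᵢ) : g ∈ 𝒢, ‖g‖ ≤ δ}]` (sup over ∅ taken to be 0). -/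
noncomputable def locRad {𝒵 Ω : Type*} [MeasurableSpace 𝒵] [MeasurableSpace Ω]
    (μ : Measure Ω) (P : Measure 𝒵) {n : ℕ} (Z : Fin n → Ω → 𝒵) (ε : Fin n → Ω → ℝ)
    (𝒢 : Set (𝒵 → ℝ)) (δ : ℝ) : ℝ :=
  ∫ ω, sSup ((fun g => radSum Z ε g ω) '' {g ∈ 𝒢 | l2norm P g ≤ δ}) ∂μ

/-- A class of functions is star-shaped about `0` if it is closed under scaling by `t ∈ [0,1]`. -/
def StarShaped {𝒵 : Type*} (𝒢 : Set (𝒵 → ℝ)) : Prop :=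
  ∀ g ∈ 𝒢, ∀ t : ℝ, 0 ≤ t → t ≤ 1 → (fun z => t * g z) ∈ 𝒢

lemma l2norm_smul {𝒵 : Type*} [MeasurableSpace 𝒵] (P : Measure 𝒵) (g : 𝒵 → ℝ)
    {c : ℝ} (hc : 0 ≤ c) : l2norm P (fun z => c * g z) = c * l2norm P g := by
  unfold l2norm
  have : ∫ z, (c * g z) ^ 2 ∂P = c ^ 2 * ∫ z, g z ^ 2 ∂P := by
    simp_rw [mul_pow]
    exact integral_const_mul _ _
  rw [this, Real.sqrt_mul (sq_nonneg c), Real.sqrt_sq hc]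

lemma radSum_smul {𝒵 Ω : Type*} {n : ℕ} (Z : Fin n → Ω → 𝒵) (ε : Fin n → Ω → ℝ)
    (g : 𝒵 → ℝ) (c : ℝ) (ω : Ω) :
    radSum Z ε (fun z => c * g z) ω = c * radSum Z ε g ω := by
  unfold radSum
  have h : ∑ i : Fin n, ε i ω * (c * g (Z i ω)) = c * ∑ i : Fin n, ε i ω * g (Z i ω) := by
    rw [Finset.mul_sum]
    exact Finset.sum_congr rfl fun i _ => by ring
  rw [h]
  ring

/-- **Rademacher complexity of self-normalized classes.**
If `F` is a nonempty countable star-shaped class of measurable functions with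
`sup_{f∈F} ‖f‖_∞ ≤ M < ∞`, then for every `δ > 0`,
`E[sup_{f∈F} (1/n) ∑ᵢ εᵢ f(Zᵢ)/max(‖f‖, δ)] ≤ (2/δ) ⬝ 𝔯ₙ(F, δ)`. -/
theorem selfNormalized_rademacher_bound
    {𝒵 Ω : Type*} [MeasurableSpace 𝒵] [MeasurableSpace Ω]
    (μ : Measure Ω) [IsProbabilityMeasure μ]
    (P : Measure 𝒵) [IsProbabilityMeasure P]
    {n : ℕ} (hn : 1 ≤ n)
    (Z : Fin n → Ω → 𝒵) (ε : Fin n → Ω → ℝ)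
    (hZmeas : ∀ i, Measurable (Z i)) (hεmeas : ∀ i, Measurable (ε i))
    (hZlaw : ∀ i, μ.map (Z i) = P)
    (hZindep : iIndepFun Z μ)
    (hεlaw : ∀ i, μ.map (ε i)
      = (2⁻¹ : ENNReal) • Measure.dirac (1 : ℝ) + (2⁻¹ : ENNReal) • Measure.dirac (-1 : ℝ))
    (hεindep : iIndepFun ε μ)
    (hZε : IndepFun (fun ω i => Z i ω) (fun ω i => ε i ω) μ)
    (F : Set (𝒵 → ℝ)) (hFne : F.Nonempty) (hFct : F.Countable)
    (hFmeas : ∀ f ∈ F, Measurable f)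
    (hstar : StarShaped F)
    (M : ℝ) (hM : ∀ f ∈ F, ∀ᵐ z ∂P, |f z| ≤ M)
    (δ : ℝ) (hδ : 0 < δ) :
    ∫ ω, sSup ((fun f => radSum Z ε f ω / max (l2norm P f) δ) '' F) ∂μ
      ≤ (2 / δ) * locRad μ P Z ε F δ := by
  have hset : ∀ ω : Ω, (fun f => radSum Z ε f ω / max (l2norm P f) δ) '' F
      = δ⁻¹ • ((fun g => radSum Z ε g ω) '' {g ∈ F | l2norm P g ≤ δ}) := by
    intro ω
    ext x
    simp only [Set.mem_image, Set.mem_smul_set, Set.mem_setOf_eq, smul_eq_mul]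
    constructor
    · rintro ⟨f, hf, rfl⟩
      have hm0 : 0 < max (l2norm P f) δ := lt_of_lt_of_le hδ (le_max_right _ _)
      set m := max (l2norm P f) δ with hm
      set c := δ / m with hc
      have hc0 : (0:ℝ) ≤ c := div_nonneg hδ.le hm0.le
      have hc1 : c ≤ 1 := by
        rw [hc, div_le_one hm0]
        exact le_max_right _ _
      refine ⟨radSum Z ε (fun z => c * f z) ω,
        ⟨(fun z => c * f z), ⟨hstar f hf c hc0 hc1, ?_⟩, rfl⟩, ?_⟩
      · rw [l2norm_smul P f hc0]
        calc c * l2norm P f ≤ c * m :=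
              mul_le_mul_of_nonneg_left (le_max_left _ _) hc0
          _ = δ := div_mul_cancel₀ δ hm0.ne'
      · rw [radSum_smul, hc]
        field_simp
    · rintro ⟨y, ⟨g, ⟨hg, hgδ⟩, rfl⟩, rfl⟩
      exact ⟨g, hg, by rw [max_eq_right hgδ, div_eq_inv_mul]⟩
  have hzero : ∀ ω : Ω,
      0 ≤ sSup ((fun g => radSum Z ε g ω) '' {g ∈ F | l2norm P g ≤ δ}) := by
    intro ω
    obtain ⟨f0, hf0⟩ := hFne
    have hmem : (fun z => (0:ℝ) * f0 z) ∈ {g ∈ F | l2norm P g ≤ δ} := by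
      refine ⟨hstar f0 hf0 0 le_rfl zero_le_one, ?_⟩
      rw [l2norm_smul P f0 le_rfl, zero_mul]
      exact hδ.le
    refine Real.sSup_nonneg' ⟨radSum Z ε (fun z => (0:ℝ) * f0 z) ω,
      Set.mem_image_of_mem _ hmem, ?_⟩
    rw [radSum_smul, zero_mul]
  have hL : 0 ≤ locRad μ P Z ε F δ := integral_nonneg fun ω => hzero ω
  have heq : ∫ ω, sSup ((fun f => radSum Z ε f ω / max (l2norm P f) δ) '' F) ∂μ
      = δ⁻¹ * locRad μ P Z ε F δ := by
    unfold locRad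
    rw [← integral_const_mul]
    congr 1
    funext ω
    rw [hset ω, Real.sSup_smul_of_nonneg (inv_nonneg.2 hδ.le), smul_eq_mul]
  rw [heq]
  apply mul_le_mul_of_nonneg_right _ hL
  rw [div_eq_mul_inv]
  have h0 : (0:ℝ) ≤ δ⁻¹ := inv_nonneg.2 hδ.le
  linarith
end

section
/- Regret transfer under weight-estimation error: let P be a probability measure on a measurable space 𝒵, F a nonempty set, and ℓ:𝒵×F→ℝ with z ↦ ℓ(z,f) measurable for each f ∈ F. Let w₀, ŵ : 𝒵→ℝ be measurable with w₀(z) ≠ 0 for P-a.e. z, and assume for every f ∈ F that w₀·ℓ(·,f) and ŵ·ℓ(·,f) are P-integrable and that w₀·(ℓ(·,f) − ℓ(·,f₀)) is square P-integrable. Define the weighted risk R(f;w) := ∫w(z)ℓ(z,f)dP(z). Suppose: f₀ ∈ F satisfies R(f₀;w₀) ≤ R(f;w₀) for all f ∈ F; f̂₀ ∈ F satisfies R(f̂₀;ŵ) ≤ R(f;ŵ) for all f ∈ F; the function 1 − ŵ/w₀ is square P-integrable with ε := (∫(1 − ŵ(z)/w₀(z))² dP(z))^{1/2} < 1/2; and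 there is c ∈ [1,∞) such that Var_P( w₀·(ℓ(·,f) − ℓ(·,f₀)) ) ≤ c·( R(f;w₀) − R(f₀;w₀) ) for all f ∈ F (weighted Bernstein condition). Then R(f̂₀;w₀) − R(f₀;w₀) ≤ 4c²ε². -/
open MeasureTheory ProbabilityTheory

/-- **Regret transfer under weight-estimation error.**
With weighted risk `R(f; w) = ∫ w(z) ℓ(z, f) dP(z)`, if `f₀` minimizes `R(·; w₀)`, `f̂₀`
minimizes `R(·; ŵ)`, `ε = ‖1 − ŵ/w₀‖_{L²(P)} < 1/2`, and the weighted Bernstein condition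
`Var_P(w₀(ℓ(·,f) − ℓ(·,f₀))) ≤ c (R(f; w₀) − R(f₀; w₀))` holds for all `f ∈ F` with
`c ≥ 1`, then `R(f̂₀; w₀) − R(f₀; w₀) ≤ 4 c² ε²`. -/
theorem weighted_erm_regret_transfer
    {𝒵 F : Type*} [MeasurableSpace 𝒵] [Nonempty F]
    (P : Measure 𝒵) [IsProbabilityMeasure P]
    (ℓ : 𝒵 → F → ℝ)
    (hmeas : ∀ f : F, Measurable fun z => ℓ z f)
    (w₀ what : 𝒵 → ℝ) (hw₀meas : Measurable w₀) (hwhatmeas : Measurable what)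
    (hw₀ne : ∀ᵐ z ∂P, w₀ z ≠ 0)
    (hint₀ : ∀ f : F, Integrable (fun z => w₀ z * ℓ z f) P)
    (hintHat : ∀ f : F, Integrable (fun z => what z * ℓ z f) P)
    (f₀ fhat₀ : F)
    (hsq : ∀ f : F, MemLp (fun z => w₀ z * (ℓ z f - ℓ z f₀)) 2 P)
    (R : F → (𝒵 → ℝ) → ℝ) (hR : ∀ f w, R f w = ∫ z, w z * ℓ z f ∂P)
    (hf₀ : ∀ f : F, R f₀ w₀ ≤ R f w₀)
    (hfhat₀ : ∀ f : F, R fhat₀ what ≤ R f what)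
    (hsqErr : MemLp (fun z => 1 - what z / w₀ z) 2 P)
    (ε : ℝ) (hε : ε = Real.sqrt (∫ z, (1 - what z / w₀ z) ^ 2 ∂P)) (hεlt : ε < 1 / 2)
    (c : ℝ) (hc : 1 ≤ c)
    (hbern : ∀ f : F,
      variance (fun z => w₀ z * (ℓ z f - ℓ z f₀)) P ≤ c * (R f w₀ - R f₀ w₀)) :
    R fhat₀ w₀ - R f₀ w₀ ≤ 4 * c ^ 2 * ε ^ 2 := by
  -- abbreviations
  set g : 𝒵 → ℝ := fun z => w₀ z * (ℓ z fhat₀ - ℓ z f₀) with hg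
  set u : 𝒵 → ℝ := fun z => 1 - what z / w₀ z with hu
  have hgmem : MemLp g 2 P := hsq fhat₀
  have hgint : Integrable g P := by
    refine ((hint₀ fhat₀).sub (hint₀ f₀)).congr (Filter.Eventually.of_forall fun z => ?_)
    simp [hg, mul_sub]
  set Δ := R fhat₀ w₀ - R f₀ w₀ with hΔdef
  clear_value Δ
  have hΔ0 : 0 ≤ Δ := hΔdef ▸ sub_nonneg.2 (hf₀ fhat₀)
  have hΔint : ∫ z, g z ∂P = Δ := by
    rw [hΔdef, hR, hR, ← integral_sub (hint₀ fhat₀) (hint₀ f₀)]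
    exact integral_congr_ae (Filter.Eventually.of_forall fun z => by simp [hg, mul_sub])
  -- Step 1 : Δ ≤ ∫ u g
  have hwg : Integrable (fun z => (what z / w₀ z) * g z) P := by
    refine ((hintHat fhat₀).sub (hintHat f₀)).congr ?_
    filter_upwards [hw₀ne] with z hz
    simp only [hg, Pi.sub_apply]
    field_simp
  have hugint : Integrable (fun z => u z * g z) P := by
    refine (hgint.sub hwg).congr (Filter.Eventually.of_forall fun z => ?_)
    simp only [Pi.sub_apply, hu]
    ring
  have hstep : Δ ≤ ∫ z, u z * g z ∂P := by
    have h1 : ∫ z, u z * g z ∂P = (∫ z, g z ∂P) - ∫ z, (what z / w₀ z) * g z ∂P := by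
      rw [← integral_sub hgint hwg]
      exact integral_congr_ae (Filter.Eventually.of_forall fun z => by simp only [hu]; ring)
    have h2 : ∫ z, (what z / w₀ z) * g z ∂P = R fhat₀ what - R f₀ what := by
      rw [hR, hR, ← integral_sub (hintHat fhat₀) (hintHat f₀)]
      refine integral_congr_ae ?_
      filter_upwards [hw₀ne] with z hz
      simp only [hg]
      field_simp
    have h3 := hfhat₀ f₀
    rw [h1, h2, hΔint]
    linarith
  -- Step 2 : Cauchy–Schwarz
  have hεnn : 0 ≤ ε := hε ▸ Real.sqrt_nonneg _
  have hInn : 0 ≤ ∫ z, u z ^ 2 ∂P := integral_nonneg fun z => sq_nonneg _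
  have hε2 : ε ^ 2 = ∫ z, u z ^ 2 ∂P := by
    rw [hε, Real.sq_sqrt hInn]
  have hrw : ∀ x : ℝ, ‖x‖ ^ (2 : ℝ) = x ^ 2 := fun x => by
    rw [show (2 : ℝ) = ((2 : ℕ) : ℝ) by norm_num, Real.rpow_natCast, Real.norm_eq_abs, sq_abs]
  have hCS : ∫ z, u z * g z ∂P ≤ ε * Real.sqrt (∫ z, g z ^ 2 ∂P) := by
    have h2conj : Real.HolderConjugate 2 2 := Real.HolderConjugate.two_two
    have h2e : (ENNReal.ofReal (2 : ℝ)) = 2 := by norm_num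
    have humem : MemLp u (ENNReal.ofReal (2 : ℝ)) P := h2e ▸ hsqErr
    have hgmem' : MemLp g (ENNReal.ofReal (2 : ℝ)) P := h2e ▸ hgmem
    have hH := MeasureTheory.integral_mul_norm_le_Lp_mul_Lq h2conj humem hgmem'
    have habs : ∫ z, u z * g z ∂P ≤ ∫ z, ‖u z‖ * ‖g z‖ ∂P := by
      calc ∫ z, u z * g z ∂P ≤ ‖∫ z, u z * g z ∂P‖ := le_abs_self _
        _ ≤ ∫ z, ‖u z * g z‖ ∂P := norm_integral_le_integral_norm _
        _ = ∫ z, ‖u z‖ * ‖g z‖ ∂P := by simp [norm_mul]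
    refine habs.trans (hH.trans (le_of_eq ?_))
    simp_rw [hrw]
    rw [← Real.sqrt_eq_rpow, ← Real.sqrt_eq_rpow, ← hε]
  -- Step 3 : Bernstein bound on second moment
  have hvar : ∫ z, g z ^ 2 ∂P ≤ c * Δ + Δ ^ 2 := by
    have h := variance_eq_sub hgmem
    have hb := hbern fhat₀
    rw [← hg, ← hΔdef] at hb
    simp only [Pi.pow_apply] at h
    rw [hΔint] at h
    have : ∫ z, g z ^ 2 ∂P = variance g P + Δ ^ 2 := by rw [h]; ring
    linarith
  -- Step 4 : put together
  have hcd0 : (0 : ℝ) ≤ c * Δ + Δ ^ 2 := by positivity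
  have hfin : Δ ≤ ε * Real.sqrt (c * Δ + Δ ^ 2) := by
    refine (hstep.trans hCS).trans ?_
    exact mul_le_mul_of_nonneg_left (Real.sqrt_le_sqrt hvar) hεnn
  have hA : Δ ^ 2 ≤ ε ^ 2 * (c * Δ + Δ ^ 2) := by
    have := pow_le_pow_left₀ hΔ0 hfin 2
    rwa [mul_pow, Real.sq_sqrt hcd0] at this
  rcases hΔ0.eq_or_lt with h0 | h0
  · rw [← h0]; positivity
  · have hε4 : ε ^ 2 ≤ 1 / 4 := by nlinarith
    have h2 : (3 / 4 * Δ) * Δ ≤ (ε ^ 2 * c) * Δ := by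
      nlinarith [mul_le_mul_of_nonneg_right hε4 (sq_nonneg Δ)]
    have h1 : (3 / 4) * Δ ≤ ε ^ 2 * c := le_of_mul_le_mul_right h2 h0
    have hc0 : (0 : ℝ) ≤ c := le_trans zero_le_one hc
    nlinarith [h1, mul_nonneg (mul_nonneg (sq_nonneg ε) hc0) (sub_nonneg.2 hc),
      mul_nonneg (sq_nonneg ε) hc0]
end
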